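/- If a bridgeless graph G admits an oriented 5-cycle double cover, then G admits a (τ², 2)-NZF, where τ = (1+√5)/2 is the golden ratio; that is, there is an orientation and an assignment φ : E(G) → ℝ² satisfying Kirchhoff's law at every vertex with 1 ≤ ‖φ(e)‖ ≤ τ for every edge e (note τ² − 1 = τ). -/

import Mathlib

open scoped BigOperators

noncomputable section

/-- The vector `(x, y)` in the Euclidean plane `ℝ²`. -/
def vec2 (x y : ℝ) : EuclideanSpace ℝ (Fin 2) := (WithLp.equiv 2 (Fin 2 → ℝ)).symm ![x, y]

/-- `f` is a `d`-dimensional nowhere-zero `r`-flow ((r,d)-NZF) on the graph `G`.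
We encode an orientation together with a flow as a skew-symmetric function on ordered
pairs of vertices, supported on adjacent pairs, whose values (on edges) have Euclidean
norm in `[1, r-1]`, and which satisfies Kirchhoff's law at every vertex. -/
def IsNZF {V : Type} [Fintype V] (G : SimpleGraph V) (d : ℕ) (r : ℝ)
    (f : V → V → EuclideanSpace ℝ (Fin d)) : Prop :=
  (∀ u v, f u v = - f v u) ∧
  (∀ u v, ¬ G.Adj u v → f u v = 0) ∧
  (∀ u v, G.Adj u v → 1 ≤ ‖f u v‖ ∧ ‖f u v‖ ≤ r - 1) ∧
  (∀ v, ∑ u, f v u = 0)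

/-- `G` admits an `(r,d)`-NZF. -/
def HasNZF {V : Type} [Fintype V] (G : SimpleGraph V) (d : ℕ) (r : ℝ) : Prop :=
  ∃ f, IsNZF G d r f

/-- A graph is bridgeless if none of its edges is a bridge. -/
def Bridgeless {V : Type} (G : SimpleGraph V) : Prop :=
  ∀ e ∈ G.edgeSet, ¬ G.IsBridge e

/-- A directed cycle of (an orientation of) `G`, encoded by its signed characteristic
function: `g u v = 1` if the cycle contains the dart `u → v`, `g u v = -1` if it contains
`v → u`, and `0` otherwise. Every vertex has equal indegree and outdegree, i.e. Kirchhoff's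
law holds. -/
def IsDirCycle {V : Type} [Fintype V] (G : SimpleGraph V) (g : V → V → ℤ) : Prop :=
  (∀ u v, g u v = - g v u) ∧
  (∀ u v, ¬ G.Adj u v → g u v = 0) ∧
  (∀ u v, g u v = 0 ∨ g u v = 1 ∨ g u v = -1) ∧
  (∀ v, ∑ u, g v u = 0)

/-- An oriented `k`-cycle double cover of `G`: `k` directed cycles such that every edge of
`G` lies in exactly two of them, with opposite directions. -/
def IsOCDC {V : Type} [Fintype V] (G : SimpleGraph V) (k : ℕ) (g : Fin k → V → V → ℤ) : Prop :=
  (∀ i, IsDirCycle G (g i)) ∧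
  (∀ u v, G.Adj u v → ∃ i j, i ≠ j ∧ g i u v = 1 ∧ g j u v = -1 ∧
    ∀ l, l ≠ i → l ≠ j → g l u v = 0)

section Aux

set_option maxHeartbeats 1000000

lemma norm_vec2' (a b : ℝ) : ‖vec2 a b‖ = Real.sqrt (a^2 + b^2) := by
  rw [EuclideanSpace.norm_eq]
  simp [vec2, Fin.sum_univ_two, Real.norm_eq_abs, sq_abs]

lemma vec2_neg' (a b : ℝ) : vec2 (-a) (-b) = -vec2 a b := by
  ext i; fin_cases i <;> simp [vec2]

lemma vec2_zero' : vec2 0 0 = 0 := by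
  ext i; fin_cases i <;> simp [vec2]

lemma vec2_add' (a b c d : ℝ) : vec2 a b + vec2 c d = vec2 (a+c) (b+d) := by
  ext i; fin_cases i <;> simp [vec2]

lemma vec2_sum' {ι : Type*} (s : Finset ι) (a b : ι → ℝ) :
    ∑ u ∈ s, vec2 (a u) (b u) = vec2 (∑ u ∈ s, a u) (∑ u ∈ s, b u) := by
  classical
  induction s using Finset.induction with
  | empty => simp [vec2_zero']
  | insert _ _ h ih =>
      rw [Finset.sum_insert h, Finset.sum_insert h, Finset.sum_insert h, ih, vec2_add']

lemma vec2_congr' {a b c d : ℝ} (h1 : a = c) (h2 : b = d) : vec2 a b = vec2 c d := by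
  rw [h1, h2]

lemma sum_two' (c x : Fin 5 → ℝ) (i j : Fin 5) (hij : i ≠ j) (hi : c i = 1) (hj : c j = -1)
    (h0 : ∀ l, l ≠ i → l ≠ j → c l = 0) : ∑ l, c l * x l = x i - x j := by
  rw [← Finset.sum_subset (Finset.subset_univ {i, j})]
  · rw [Finset.sum_pair hij, hi, hj]; ring
  · intro l _ hl
    simp only [Finset.mem_insert, Finset.mem_singleton] at hl
    push_neg at hl
    rw [h0 l hl.1 hl.2, zero_mul]

lemma dist_cases' (t p q : ℝ) (ht : t^2 = t+1) (hp : p^2 = (3-t)/4) (hq : q^2 = (2+t)/4)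
    (hpq : p*q = (2*t-1)/4) (i j : Fin 5) (hij : i ≠ j) :
    (![0, 1, (t+1)/2, 1/2, (1-t)/2] i - ![0, 1, (t+1)/2, 1/2, (1-t)/2] j)^2
      + (![0, 0, q, p+q, q] i - ![0, 0, q, p+q, q] j)^2 = 1 ∨
    (![0, 1, (t+1)/2, 1/2, (1-t)/2] i - ![0, 1, (t+1)/2, 1/2, (1-t)/2] j)^2
      + (![0, 0, q, p+q, q] i - ![0, 0, q, p+q, q] j)^2 = t^2 := by
  fin_cases i <;> fin_cases j <;>
    simp <;>
  first
    | exact absurd rfl hij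
    | (left; nlinarith [ht, hp, hq, hpq])
    | (right; nlinarith [ht, hp, hq, hpq])

end Aux

/-- If a bridgeless graph admits an oriented 5-cycle double cover, then it admits a
`(τ², 2)`-NZF, where `τ = (1+√5)/2` is the golden ratio (note `τ² - 1 = τ`). -/
theorem stmt_2 {V : Type} [Fintype V] (G : SimpleGraph V) (hG : Bridgeless G)
    (g : Fin 5 → V → V → ℤ) (hg : IsOCDC G 5 g) :
    HasNZF G 2 (((1 + Real.sqrt 5) / 2) ^ 2) := by
  classical
  obtain ⟨hcyc, hcov⟩ := hg
  set t : ℝ := (1 + Real.sqrt 5) / 2 with htdef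
  have hs5 : Real.sqrt 5 ^ 2 = 5 := Real.sq_sqrt (by norm_num)
  have hs5nn : (0:ℝ) ≤ Real.sqrt 5 := Real.sqrt_nonneg 5
  have hs5ge : (2:ℝ) ≤ Real.sqrt 5 := by nlinarith
  have ht : t^2 = t + 1 := by rw [htdef]; nlinarith
  have ht1 : (1:ℝ) ≤ t := by rw [htdef]; nlinarith
  -- the pentagon heights
  set p : ℝ := Real.sqrt (3 - t) / 2 with hpdef
  set q : ℝ := Real.sqrt (2 + t) / 2 with hqdef
  have h3t : (0:ℝ) ≤ 3 - t := by rw [htdef]; nlinarith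
  have h2t : (0:ℝ) ≤ 2 + t := by rw [htdef]; nlinarith
  have hp : p^2 = (3-t)/4 := by
    rw [hpdef, div_pow, Real.sq_sqrt h3t]; norm_num
  have hq : q^2 = (2+t)/4 := by
    rw [hqdef, div_pow, Real.sq_sqrt h2t]; norm_num
  have hpq : p*q = (2*t-1)/4 := by
    have key : Real.sqrt (3 - t) * Real.sqrt (2 + t) = 2*t - 1 := by
      rw [← Real.sqrt_mul h3t]
      rw [show 2*t - 1 = Real.sqrt 5 by rw [htdef]; ring]
      congr 1
      nlinarith
    rw [hpdef, hqdef]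
    rw [div_mul_div_comm, key]; norm_num
  set X : Fin 5 → ℝ := ![0, 1, (t+1)/2, 1/2, (1-t)/2] with hX
  set Y : Fin 5 → ℝ := ![0, 0, q, p+q, q] with hY
  refine ⟨fun u v => vec2 (∑ i, (g i u v : ℝ) * X i) (∑ i, (g i u v : ℝ) * Y i), ?_, ?_, ?_, ?_⟩
  · -- skew-symmetry
    intro u v
    dsimp only
    rw [← vec2_neg', ← Finset.sum_neg_distrib, ← Finset.sum_neg_distrib]
    apply vec2_congr'
    · apply Finset.sum_congr rfl
      intro i _
      rw [(hcyc i).1 u v]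
      push_cast
      ring
    · apply Finset.sum_congr rfl
      intro i _
      rw [(hcyc i).1 u v]
      push_cast
      ring
  · -- support
    intro u v huv
    have hz : ∀ i : Fin 5, g i u v = 0 := fun i => (hcyc i).2.1 u v huv
    dsimp only
    rw [← vec2_zero']
    apply vec2_congr'
    · apply Finset.sum_eq_zero
      intro i _
      rw [hz i]
      push_cast
      ring
    · apply Finset.sum_eq_zero
      intro i _
      rw [hz i]
      push_cast
      ring
  · -- norm bounds
    intro u v huv
    obtain ⟨i, j, hij, hi, hj, h0⟩ := hcov u v huv
    dsimp only
    have hXs : ∑ l, (g l u v : ℝ) * X l = X i - X j := by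
      apply sum_two' _ _ _ _ hij
      · rw [hi]; norm_num
      · rw [hj]; norm_num
      · intro l hli hlj; rw [h0 l hli hlj]; norm_num
    have hYs : ∑ l, (g l u v : ℝ) * Y l = Y i - Y j := by
      apply sum_two' _ _ _ _ hij
      · rw [hi]; norm_num
      · rw [hj]; norm_num
      · intro l hli hlj; rw [h0 l hli hlj]; norm_num
    rw [hXs, hYs, norm_vec2']
    have hd := dist_cases' t p q ht hp hq hpq i j hij
    rw [← hX, ← hY] at hd
    have ht' : t^2 - 1 = t := by nlinarith
    rcases hd with h | h
    · rw [h]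
      simp [ht', ht1]
    · rw [h, Real.sqrt_sq (by linarith)]
      constructor <;> nlinarith
  · -- Kirchhoff
    intro v
    dsimp only
    rw [vec2_sum', ← vec2_zero']
    apply vec2_congr' <;>
      · rw [Finset.sum_comm]
        apply Finset.sum_eq_zero
        intro i _
        rw [← Finset.sum_mul]
        have : ∑ u, (g i v u : ℝ) = 0 := by
          rw [← Int.cast_sum, (hcyc i).2.2.2 v]; norm_num
        rw [this, zero_mul]
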